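/- Let G = (V,E) be a locally finite graph and q : V → [0,∞), and assume α_∞ > 0. Then for every ε > 0 there is k_ε ≥ 0 such that for all finitely supported f : V → ℂ, (1−ε)(1 − √(1 − α_∞²))·(Q_deg(f) + Q_q(f)) − k_ε·‖f‖² ≤ Q_Δ(f) + Q_q(f) ≤ (1+ε)(1 + √(1 − α_∞²))·(Q_deg(f) + Q_q(f)) + k_ε·‖f‖². -/

import Mathlib

open scoped BigOperators

noncomputable section

variable {V : Type*} [DecidableEq V] (G : SimpleGraph V) [DecidableRel G.Adj]

/-- The squared `ℓ²`-norm `‖f‖² = ∑_x |f x|²` of a (finitely supported) function. -/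
def qNormSq (f : V → ℂ) : ℝ := ∑' x, ‖f x‖ ^ 2

/-- The quadratic form of the Laplacian:
`Q_Δ(f) = (1/2) ∑_{x ~ y} |f x - f y|²` (sum over ordered pairs of adjacent vertices). -/
def qLap (f : V → ℂ) : ℝ :=
  (1 / 2) * ∑' (x : V), ∑' (y : V), if G.Adj x y then ‖f x - f y‖ ^ 2 else 0

/-- The magnetic quadratic form
`Q_θ(f) = (1/2) ∑_{x ~ y} |f x - e^{iθ(x,y)} f y|²`. -/
def qMag (θ : V → V → ℝ) (f : V → ℂ) : ℝ :=
  (1 / 2) * ∑' (x : V), ∑' (y : V),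
    if G.Adj x y then ‖f x - Complex.exp (Complex.I * (θ x y)) * f y‖ ^ 2 else 0

/-- The quadratic form of a potential: `Q_q(f) = ∑_x q x * |f x|²`. -/
def qPot (q : V → ℝ) (f : V → ℂ) : ℝ := ∑' x, q x * ‖f x‖ ^ 2

variable [G.LocallyFinite]

/-- The quadratic form of the degree: `Q_deg(f) = ∑_x deg x * |f x|²`. -/
def qDeg (f : V → ℂ) : ℝ := ∑' x, (G.degree x : ℝ) * ‖f x‖ ^ 2

/-- Twice the number of undirected edges of the subgraph induced on `W`,
i.e. the number of ordered pairs of adjacent vertices in `W × W`. -/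
def edgesTwice (W : Finset V) : ℕ := ((W ×ˢ W).filter fun p => G.Adj p.1 p.2).card

/-- The cardinality `|∂W|` of the edge boundary of `W`. -/
def bdryCard (W : Finset V) : ℕ :=
  ∑ x ∈ W, ((G.neighborFinset x).filter fun y => y ∉ W).card

/-- `(G, q)` is `(a,k)`-sparse: `2|E_W| ≤ k|W| + a(|∂W| + q₊(W))` for all finite `W`. -/
def IsSparse (q : V → ℝ) (a k : ℝ) : Prop :=
  ∀ W : Finset V,
    (edgesTwice G W : ℝ) ≤ k * W.card + a * ((bdryCard G W : ℝ) + ∑ x ∈ W, max (q x) 0)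

/-- The potential `q` belongs to the class `K_α`:
`Q_{q₋}(f) ≤ α (Q_Δ(f) + Q_{q₊}(f)) + C ‖f‖²` for all finitely supported `f`. -/
def KClass (q : V → ℝ) (α : ℝ) : Prop :=
  ∃ C : ℝ, 0 ≤ C ∧ ∀ f : V → ℂ, (Function.support f).Finite →
    qPot (fun x => max (-q x) 0) f ≤
      α * (qLap G f + qPot (fun x => max (q x) 0) f) + C * qNormSq f

/-- The potential `q` belongs to the magnetic class `K_α^θ`:
`Q_{q₋}(f) ≤ α (Q_θ(f) + Q_{q₊}(f)) + C ‖f‖²` for all finitely supported `f`. -/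
def KClassTheta (θ : V → V → ℝ) (q : V → ℝ) (α : ℝ) : Prop :=
  ∃ C : ℝ, 0 ≤ C ∧ ∀ f : V → ℂ, (Function.support f).Finite →
    qPot (fun x => max (-q x) 0) f ≤
      α * (qMag G θ f + qPot (fun x => max (q x) 0) f) + C * qNormSq f

/-- The Cheeger (isoperimetric) constant of `U ⊆ V`:
the infimum over nonempty finite `W ⊆ U` of `(|∂W| + q(W)) / (deg(W) + q(W))`,
with the convention that the quotient is `0` when the denominator vanishes. -/
def cheeger (q : V → ℝ) (U : Set V) : ℝ :=
  ⨅ W : {W : Finset V // ↑W ⊆ U ∧ W.Nonempty},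
    if (∑ x ∈ W.1, ((G.degree x : ℝ) + q x)) = 0 then 0
    else ((bdryCard G W.1 : ℝ) + ∑ x ∈ W.1, q x) / ∑ x ∈ W.1, ((G.degree x : ℝ) + q x)

/-- The Cheeger constant at infinity: `α_∞ = sup over finite K of α_{V∖K}`. -/
def cheegerInfty (q : V → ℝ) : ℝ :=
  ⨆ K : Finset V, cheeger G q ((↑K : Set V)ᶜ)


set_option linter.unusedSectionVars false
set_option linter.unusedVariables false
set_option linter.unnecessarySeqFocus false
set_option maxHeartbeats 1000000

lemma my_swap_sum (T : Finset V) (F : V → V → ℝ)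
    (hF : ∀ x y, G.Adj x y → F x y ≠ 0 → x ∈ T ∧ y ∈ T) :
    ∑ x ∈ T, ∑ y ∈ G.neighborFinset x, F x y
      = ∑ x ∈ T, ∑ y ∈ G.neighborFinset x, F y x := by
  have h1 := Finset.sum_sigma T (fun x => G.neighborFinset x) (fun p : Σ _ : V, V => F p.1 p.2)
  have h2 := Finset.sum_sigma T (fun x => G.neighborFinset x) (fun p : Σ _ : V, V => F p.2 p.1)
  simp only at h1 h2
  rw [← h1, ← h2]
  rw [← Finset.sum_filter_ne_zero (T.sigma fun x => G.neighborFinset x)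
    (f := fun p : Σ _ : V, V => F p.1 p.2)]
  rw [← Finset.sum_filter_ne_zero (T.sigma fun x => G.neighborFinset x)
    (f := fun p : Σ _ : V, V => F p.2 p.1)]
  refine Finset.sum_nbij' (fun p => ⟨p.2, p.1⟩) (fun p => ⟨p.2, p.1⟩) ?_ ?_ ?_ ?_ ?_
  · rintro ⟨x, y⟩ hp
    simp only [Finset.mem_filter, Finset.mem_sigma, SimpleGraph.mem_neighborFinset] at hp ⊢
    obtain ⟨⟨hx, hadj⟩, hne⟩ := hp
    exact ⟨⟨(hF x y hadj hne).2, hadj.symm⟩, hne⟩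
  · rintro ⟨x, y⟩ hp
    simp only [Finset.mem_filter, Finset.mem_sigma, SimpleGraph.mem_neighborFinset] at hp ⊢
    obtain ⟨⟨hx, hadj⟩, hne⟩ := hp
    exact ⟨⟨(hF y x hadj.symm hne).1, hadj.symm⟩, hne⟩
  · rintro ⟨x, y⟩ _; rfl
  · rintro ⟨x, y⟩ _; rfl
  · rintro ⟨x, y⟩ _; rfl

/-- Boundary count via indicator sums. -/
lemma my_indicator_bdry (T : Finset V) (W : Finset V) (hWT : W ⊆ T)
    (hnbr : ∀ x y, G.Adj x y → y ∈ W → x ∈ T) :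
    ∑ x ∈ T, ∑ y ∈ G.neighborFinset x,
        |(if x ∈ W then (1:ℝ) else 0) - (if y ∈ W then (1:ℝ) else 0)|
      = 2 * (bdryCard G W : ℝ) := by
  have step1 : ∀ x y : V,
      |(if x ∈ W then (1:ℝ) else 0) - (if y ∈ W then (1:ℝ) else 0)|
        = (if x ∈ W then (1:ℝ) else 0) * (1 - if y ∈ W then (1:ℝ) else 0)
          + (if y ∈ W then (1:ℝ) else 0) * (1 - if x ∈ W then (1:ℝ) else 0) := by
    intro x y
    by_cases hx : x ∈ W <;> by_cases hy : y ∈ W <;> simp [hx, hy]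
  have hswap : ∑ x ∈ T, ∑ y ∈ G.neighborFinset x,
        (if x ∈ W then (1:ℝ) else 0) * (1 - if y ∈ W then (1:ℝ) else 0)
      = ∑ x ∈ T, ∑ y ∈ G.neighborFinset x,
        (if y ∈ W then (1:ℝ) else 0) * (1 - if x ∈ W then (1:ℝ) else 0) := by
    refine my_swap_sum G T (fun x y => (if x ∈ W then (1:ℝ) else 0) * (1 - if y ∈ W then (1:ℝ) else 0)) ?_
    intro x y hadj hne
    have hx : x ∈ W := by by_contra h; simp [h] at hne
    have hy : y ∉ W := by by_contra h; simp [h] at hne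
    exact ⟨hWT hx, hnbr y x hadj.symm hx⟩
  have main : ∑ x ∈ T, ∑ y ∈ G.neighborFinset x,
        (if x ∈ W then (1:ℝ) else 0) * (1 - if y ∈ W then (1:ℝ) else 0)
      = (bdryCard G W : ℝ) := by
    have inner : ∀ x : V, ∑ y ∈ G.neighborFinset x, (1 - if y ∈ W then (1:ℝ) else 0)
        = (((G.neighborFinset x).filter fun y => y ∉ W).card : ℝ) := by
      intro x
      rw [show (∑ y ∈ G.neighborFinset x, (1 - if y ∈ W then (1:ℝ) else 0))
          = ∑ y ∈ G.neighborFinset x, (if y ∉ W then (1:ℝ) else 0) from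
        Finset.sum_congr rfl fun y _ => by by_cases hy : y ∈ W <;> simp [hy]]
      rw [Finset.sum_boole]
    calc ∑ x ∈ T, ∑ y ∈ G.neighborFinset x,
          (if x ∈ W then (1:ℝ) else 0) * (1 - if y ∈ W then (1:ℝ) else 0)
        = ∑ x ∈ T, (if x ∈ W then (1:ℝ) else 0)
            * (((G.neighborFinset x).filter fun y => y ∉ W).card : ℝ) := by
          refine Finset.sum_congr rfl fun x _ => ?_
          rw [← Finset.mul_sum, inner x]
      _ = ∑ x ∈ W, (((G.neighborFinset x).filter fun y => y ∉ W).card : ℝ) := by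
          rw [show (∑ x ∈ T, (if x ∈ W then (1:ℝ) else 0)
              * (((G.neighborFinset x).filter fun y => y ∉ W).card : ℝ))
              = ∑ x ∈ T, (if x ∈ W then (((G.neighborFinset x).filter fun y => y ∉ W).card : ℝ) else 0) from
            Finset.sum_congr rfl fun x _ => by by_cases hx : x ∈ W <;> simp [hx]]
          rw [Finset.sum_ite_mem, Finset.inter_eq_right.mpr hWT]
      _ = (bdryCard G W : ℝ) := by
          rw [bdryCard, Nat.cast_sum]
  calc ∑ x ∈ T, ∑ y ∈ G.neighborFinset x,
        |(if x ∈ W then (1:ℝ) else 0) - (if y ∈ W then (1:ℝ) else 0)|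
      = ∑ x ∈ T, ∑ y ∈ G.neighborFinset x,
          ((if x ∈ W then (1:ℝ) else 0) * (1 - if y ∈ W then (1:ℝ) else 0)
            + (if y ∈ W then (1:ℝ) else 0) * (1 - if x ∈ W then (1:ℝ) else 0)) := by
        exact Finset.sum_congr rfl fun x _ => Finset.sum_congr rfl fun y _ => step1 x y
    _ = 2 * (bdryCard G W : ℝ) := by
        rw [Finset.sum_congr rfl fun x _ => Finset.sum_add_distrib]
        rw [Finset.sum_add_distrib, ← hswap, main]
        ring

/-- Discrete co-area inequality, by induction on the size of the support. -/
lemma my_coarea (q : V → ℝ) (U : Set V) (c : ℝ) (hc0 : 0 ≤ c)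
    (hC : ∀ W : Finset V, ↑W ⊆ U → W.Nonempty →
      c * (∑ x ∈ W, ((G.degree x : ℝ) + q x)) ≤ (bdryCard G W : ℝ) + ∑ x ∈ W, q x)
    (T : Finset V) :
    ∀ n : ℕ, ∀ g : V → ℝ, (∀ x, 0 ≤ g x) →
      (∀ x, g x ≠ 0 → x ∈ T) → (∀ x y, G.Adj x y → g y ≠ 0 → x ∈ T) →
      (∀ x, g x ≠ 0 → x ∈ U) →
      (T.filter fun x => g x ≠ 0).card ≤ n →
      c * ∑ x ∈ T, ((G.degree x : ℝ) + q x) * g x ≤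
        (1/2) * (∑ x ∈ T, ∑ y ∈ G.neighborFinset x, |g x - g y|) + ∑ x ∈ T, q x * g x := by
  intro n
  induction n with
  | zero =>
    intro g hg0 hsupp hnbr hU hcard
    have hz : ∀ x, g x = 0 := by
      intro x
      by_contra h
      have hx : x ∈ T.filter fun x => g x ≠ 0 := Finset.mem_filter.mpr ⟨hsupp x h, h⟩
      have := Finset.card_pos.mpr ⟨x, hx⟩
      omega
    simp [hz]
  | succ n ih =>
    intro g hg0 hsupp hnbr hU hcard
    set W := T.filter fun x => g x ≠ 0 with hWdef
    by_cases hW : W.Nonempty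
    swap
    · have hz : ∀ x, g x = 0 := by
        intro x
        by_contra h
        exact hW ⟨x, Finset.mem_filter.mpr ⟨hsupp x h, h⟩⟩
      simp [hz]
    -- basic facts
    have hWzero : ∀ z, z ∉ W → g z = 0 := by
      intro z hz
      by_contra h
      exact hz (Finset.mem_filter.mpr ⟨hsupp z h, h⟩)
    set m := W.inf' hW g with hmdef
    have hm_le : ∀ z ∈ W, m ≤ g z := fun z hz => Finset.inf'_le g hz
    have hm_pos : 0 < m := by
      rw [hmdef, Finset.lt_inf'_iff]
      intro b hb
      have := (Finset.mem_filter.mp hb).2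
      exact lt_of_le_of_ne (hg0 b) (Ne.symm this)
    obtain ⟨x0, hx0W, hx0⟩ := Finset.exists_mem_eq_inf' hW g
    set g' : V → ℝ := fun x => if x ∈ W then g x - m else 0 with hg'def
    have hg'0 : ∀ x, 0 ≤ g' x := by
      intro x
      by_cases hx : x ∈ W
      · simp only [hg'def, if_pos hx]; linarith [hm_le x hx]
      · simp [hg'def, hx]
    have hkey : ∀ x, g x = g' x + (if x ∈ W then m else 0) := by
      intro x
      by_cases hx : x ∈ W
      · simp [hg'def, hx]
      · simp [hg'def, hx, hWzero x hx]
    have hg'supp : ∀ x, g' x ≠ 0 → x ∈ W := by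
      intro x h
      by_contra hx; exact h (by simp [hg'def, hx])
    -- card decrease
    have hcard' : (T.filter fun x => g' x ≠ 0).card ≤ n := by
      have hsub : (T.filter fun x => g' x ≠ 0) ⊆ W.erase x0 := by
        intro x hx
        have hx' := (Finset.mem_filter.mp hx).2
        have hxW := hg'supp x hx'
        refine Finset.mem_erase.mpr ⟨?_, hxW⟩
        intro hxx0
        apply hx'
        subst hxx0
        simp [hg'def, hxW, ← hx0, hmdef]
      have h1 : (W.erase x0).card < W.card := Finset.card_erase_lt_of_mem hx0W
      have h2 := Finset.card_le_card hsub
      omega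
    -- IH for g'
    have IH := ih g' hg'0 (fun x h => (Finset.mem_filter.mp (hg'supp x h)).1)
      (fun x y hadj h => hnbr x y hadj (Finset.mem_filter.mp (hg'supp y h)).2)
      (fun x h => hU x (Finset.mem_filter.mp (hg'supp x h)).2) hcard'
    -- Cheeger for W
    have hWU : ↑W ⊆ U := fun x hx => hU x (Finset.mem_filter.mp hx).2
    have HC := hC W hWU hW
    -- sum splittings
    have split : ∀ cf : V → ℝ, ∑ x ∈ T, cf x * g x
        = (∑ x ∈ T, cf x * g' x) + m * ∑ x ∈ W, cf x := by
      intro cf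
      have : ∀ x ∈ T, cf x * g x = cf x * g' x + (if x ∈ W then cf x * m else 0) := by
        intro x _
        rw [hkey x]
        by_cases hx : x ∈ W <;> simp [hx] <;> ring
      rw [Finset.sum_congr rfl this, Finset.sum_add_distrib, Finset.sum_ite_mem,
        Finset.inter_eq_right.mpr (Finset.filter_subset _ T), ← Finset.sum_mul, Finset.mul_sum]
      congr 1
      rw [← hWdef, Finset.sum_mul]
      exact Finset.sum_congr rfl fun x _ => mul_comm _ _
    -- gradient splitting
    have grad_pt : ∀ x y : V, |g x - g y|
        = m * |(if x ∈ W then (1:ℝ) else 0) - (if y ∈ W then (1:ℝ) else 0)| + |g' x - g' y| := by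
      intro x y
      by_cases hx : x ∈ W <;> by_cases hy : y ∈ W
      · simp only [hg'def, if_pos hx, if_pos hy, sub_self, abs_zero]
        ring_nf
      · have hgy := hWzero y hy
        have h1 : m ≤ g x := hm_le x hx
        simp only [hg'def, if_pos hx, if_neg hy, hgy]
        rw [abs_of_nonneg (by linarith), abs_of_nonneg (by linarith), abs_of_nonneg (by linarith [hm_pos])]
        ring
      · have hgx := hWzero x hx
        have h1 : m ≤ g y := hm_le y hy
        simp only [hg'def, if_neg hx, if_pos hy, hgx]
        rw [abs_of_nonpos (by linarith), abs_of_nonpos (by linarith), abs_of_nonpos (by linarith [hm_pos])]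
        ring
      · simp [hg'def, hx, hy, hWzero x hx, hWzero y hy]
    have grad_split : ∑ x ∈ T, ∑ y ∈ G.neighborFinset x, |g x - g y|
        = m * (2 * (bdryCard G W : ℝ)) + ∑ x ∈ T, ∑ y ∈ G.neighborFinset x, |g' x - g' y| := by
      have hbdry := my_indicator_bdry G T W (Finset.filter_subset _ T)
        (fun x y hadj hy => hnbr x y hadj (Finset.mem_filter.mp hy).2)
      calc ∑ x ∈ T, ∑ y ∈ G.neighborFinset x, |g x - g y|
          = ∑ x ∈ T, ∑ y ∈ G.neighborFinset x,
            (m * |(if x ∈ W then (1:ℝ) else 0) - (if y ∈ W then (1:ℝ) else 0)| + |g' x - g' y|) :=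
            Finset.sum_congr rfl fun x _ => Finset.sum_congr rfl fun y _ => grad_pt x y
        _ = m * ∑ x ∈ T, ∑ y ∈ G.neighborFinset x,
              |(if x ∈ W then (1:ℝ) else 0) - (if y ∈ W then (1:ℝ) else 0)|
            + ∑ x ∈ T, ∑ y ∈ G.neighborFinset x, |g' x - g' y| := by
            rw [Finset.sum_congr rfl fun x _ => Finset.sum_add_distrib, Finset.sum_add_distrib]
            rw [Finset.mul_sum]
            congr 1
            exact Finset.sum_congr rfl fun x _ => (Finset.mul_sum _ _ _).symm
        _ = m * (2 * (bdryCard G W : ℝ)) + ∑ x ∈ T, ∑ y ∈ G.neighborFinset x, |g' x - g' y| := by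
            rw [hbdry]
    -- combine
    have e1 := split (fun x => (G.degree x : ℝ) + q x)
    have e2 := split q
    have hprod : m * (c * ∑ x ∈ W, ((G.degree x : ℝ) + q x))
        ≤ m * ((bdryCard G W : ℝ) + ∑ x ∈ W, q x) :=
      mul_le_mul_of_nonneg_left HC (le_of_lt hm_pos)
    calc c * ∑ x ∈ T, ((G.degree x : ℝ) + q x) * g x
        = c * ∑ x ∈ T, ((G.degree x : ℝ) + q x) * g' x
          + m * (c * ∑ x ∈ W, ((G.degree x : ℝ) + q x)) := by rw [e1]; ring
      _ ≤ ((1/2) * (∑ x ∈ T, ∑ y ∈ G.neighborFinset x, |g' x - g' y|)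
            + ∑ x ∈ T, q x * g' x)
          + m * ((bdryCard G W : ℝ) + ∑ x ∈ W, q x) := add_le_add IH hprod
      _ = (1/2) * (∑ x ∈ T, ∑ y ∈ G.neighborFinset x, |g x - g y|) + ∑ x ∈ T, q x * g x := by
          rw [grad_split, e2]; ring

/-- Cauchy–Schwarz step. -/
lemma my_cs (q : V → ℝ) (hq : ∀ x, 0 ≤ q x) (T : Finset V) (g : V → ℝ) (hg0 : ∀ x, 0 ≤ g x) :
    ((1/2) * (∑ x ∈ T, ∑ y ∈ G.neighborFinset x, |g x ^ 2 - g y ^ 2|) + ∑ x ∈ T, q x * g x ^ 2)^2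
      ≤ ((1/2) * (∑ x ∈ T, ∑ y ∈ G.neighborFinset x, (g x - g y)^2) + ∑ x ∈ T, q x * g x ^ 2)
        * ((1/2) * (∑ x ∈ T, ∑ y ∈ G.neighborFinset x, (g x + g y)^2)
            + ∑ x ∈ T, q x * g x ^ 2) := by
  classical
  set s := (T.sigma fun x => G.neighborFinset x).disjSum T with hs
  set u : (Σ _ : V, V) ⊕ V → ℝ :=
    Sum.elim (fun p => Real.sqrt (1/2) * |g p.1 - g p.2|) (fun x => Real.sqrt (q x) * g x) with hu
  set v : (Σ _ : V, V) ⊕ V → ℝ :=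
    Sum.elim (fun p => Real.sqrt (1/2) * (g p.1 + g p.2)) (fun x => Real.sqrt (q x) * g x) with hv
  have half : Real.sqrt (1/2) * Real.sqrt (1/2) = 1/2 := Real.mul_self_sqrt (by norm_num)
  have hqq : ∀ x, Real.sqrt (q x) * Real.sqrt (q x) = q x := fun x => Real.mul_self_sqrt (hq x)
  have key := Finset.sum_mul_sq_le_sq_mul_sq s u v
  have e1 : ∑ i ∈ s, u i * v i
      = (1/2) * (∑ x ∈ T, ∑ y ∈ G.neighborFinset x, |g x ^ 2 - g y ^ 2|)
        + ∑ x ∈ T, q x * g x ^ 2 := by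
    rw [hs, Finset.sum_disjSum]
    congr 1
    · rw [Finset.sum_sigma, Finset.mul_sum]
      refine Finset.sum_congr rfl fun x _ => ?_
      rw [Finset.mul_sum]
      refine Finset.sum_congr rfl fun y hy => ?_
      simp only [hu, hv, Sum.elim_inl]
      have habs : |g x ^ 2 - g y ^ 2| = |g x - g y| * (g x + g y) := by
        rw [show g x ^ 2 - g y ^ 2 = (g x - g y) * (g x + g y) by ring, abs_mul,
          abs_of_nonneg (add_nonneg (hg0 x) (hg0 y))]
      rw [habs]
      calc Real.sqrt (1/2) * |g x - g y| * (Real.sqrt (1/2) * (g x + g y))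
          = (Real.sqrt (1/2) * Real.sqrt (1/2)) * (|g x - g y| * (g x + g y)) := by ring
        _ = 1/2 * (|g x - g y| * (g x + g y)) := by rw [half]
    · refine Finset.sum_congr rfl fun x _ => ?_
      simp only [hu, hv, Sum.elim_inr]
      calc Real.sqrt (q x) * g x * (Real.sqrt (q x) * g x)
          = (Real.sqrt (q x) * Real.sqrt (q x)) * (g x * g x) := by ring
        _ = q x * g x ^ 2 := by rw [hqq x]; ring
  have e2 : ∑ i ∈ s, u i ^ 2
      = (1/2) * (∑ x ∈ T, ∑ y ∈ G.neighborFinset x, (g x - g y)^2)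
        + ∑ x ∈ T, q x * g x ^ 2 := by
    rw [hs, Finset.sum_disjSum]
    congr 1
    · rw [Finset.sum_sigma, Finset.mul_sum]
      refine Finset.sum_congr rfl fun x _ => ?_
      rw [Finset.mul_sum]
      refine Finset.sum_congr rfl fun y hy => ?_
      simp only [hu, Sum.elim_inl]
      calc (Real.sqrt (1/2) * |g x - g y|) ^ 2
          = (Real.sqrt (1/2) * Real.sqrt (1/2)) * |g x - g y| ^ 2 := by ring
        _ = (1/2) * (g x - g y)^2 := by rw [half, sq_abs]
    · refine Finset.sum_congr rfl fun x _ => ?_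
      simp only [hu, Sum.elim_inr]
      calc (Real.sqrt (q x) * g x) ^ 2
          = (Real.sqrt (q x) * Real.sqrt (q x)) * g x ^ 2 := by ring
        _ = q x * g x ^ 2 := by rw [hqq x]
  have e3 : ∑ i ∈ s, v i ^ 2
      = (1/2) * (∑ x ∈ T, ∑ y ∈ G.neighborFinset x, (g x + g y)^2)
        + ∑ x ∈ T, q x * g x ^ 2 := by
    rw [hs, Finset.sum_disjSum]
    congr 1
    · rw [Finset.sum_sigma, Finset.mul_sum]
      refine Finset.sum_congr rfl fun x _ => ?_
      rw [Finset.mul_sum]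
      refine Finset.sum_congr rfl fun y hy => ?_
      simp only [hv, Sum.elim_inl]
      calc (Real.sqrt (1/2) * (g x + g y)) ^ 2
          = (Real.sqrt (1/2) * Real.sqrt (1/2)) * (g x + g y) ^ 2 := by ring
        _ = (1/2) * (g x + g y)^2 := by rw [half]
    · refine Finset.sum_congr rfl fun x _ => ?_
      simp only [hv, Sum.elim_inr]
      calc (Real.sqrt (q x) * g x) ^ 2
          = (Real.sqrt (q x) * Real.sqrt (q x)) * g x ^ 2 := by ring
        _ = q x * g x ^ 2 := by rw [hqq x]
  rw [e1, e2, e3] at key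
  exact key


lemma my_qNormSq_eq (f : V → ℂ) (T : Finset V) (hT : ∀ x, f x ≠ 0 → x ∈ T) :
    qNormSq f = ∑ x ∈ T, ‖f x‖ ^ 2 := by
  refine tsum_eq_sum fun x hx => ?_
  have : f x = 0 := by by_contra h; exact hx (hT x h)
  simp [this]

lemma my_qPot_eq (q : V → ℝ) (f : V → ℂ) (T : Finset V) (hT : ∀ x, f x ≠ 0 → x ∈ T) :
    qPot q f = ∑ x ∈ T, q x * ‖f x‖ ^ 2 := by
  refine tsum_eq_sum fun x hx => ?_
  have : f x = 0 := by by_contra h; exact hx (hT x h)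
  simp [this]

lemma my_qDeg_eq (f : V → ℂ) (T : Finset V) (hT : ∀ x, f x ≠ 0 → x ∈ T) :
    qDeg G f = ∑ x ∈ T, (G.degree x : ℝ) * ‖f x‖ ^ 2 := by
  refine tsum_eq_sum fun x hx => ?_
  have : f x = 0 := by by_contra h; exact hx (hT x h)
  simp [this]

lemma my_qLap_eq (f : V → ℂ) (T : Finset V) (h1 : ∀ x, f x ≠ 0 → x ∈ T)
    (h2 : ∀ x y, G.Adj x y → f y ≠ 0 → x ∈ T) :
    qLap G f = (1 / 2) * ∑ x ∈ T, ∑ y ∈ G.neighborFinset x, ‖f x - f y‖ ^ 2 := by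
  unfold qLap
  congr 1
  have inner : ∀ x : V, (∑' (y : V), if G.Adj x y then ‖f x - f y‖ ^ 2 else 0)
      = ∑ y ∈ G.neighborFinset x, ‖f x - f y‖ ^ 2 := by
    intro x
    rw [tsum_eq_sum (s := G.neighborFinset x)
      (fun y hy => by rw [if_neg (by simpa [SimpleGraph.mem_neighborFinset] using hy)])]
    exact Finset.sum_congr rfl fun y hy =>
      if_pos (by simpa [SimpleGraph.mem_neighborFinset] using hy)
  calc (∑' (x : V), ∑' (y : V), if G.Adj x y then ‖f x - f y‖ ^ 2 else 0)
      = ∑' (x : V), ∑ y ∈ G.neighborFinset x, ‖f x - f y‖ ^ 2 := by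
        exact tsum_congr inner
    _ = ∑ x ∈ T, ∑ y ∈ G.neighborFinset x, ‖f x - f y‖ ^ 2 := by
        refine tsum_eq_sum fun x hx => ?_
        refine Finset.sum_eq_zero fun y hy => ?_
        have hadj : G.Adj x y := by simpa [SimpleGraph.mem_neighborFinset] using hy
        have hfy : f y = 0 := by by_contra h; exact hx (h2 x y hadj h)
        have hfx : f x = 0 := by by_contra h; exact hx (h1 x h)
        simp [hfx, hfy]


lemma my_regional (q : V → ℝ) (hq : ∀ x, 0 ≤ q x) (U : Set V) (c : ℝ) (hc0 : 0 ≤ c) (hc1 : c ≤ 1)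
    (hC : ∀ W : Finset V, ↑W ⊆ U → W.Nonempty →
      c * (∑ x ∈ W, ((G.degree x : ℝ) + q x)) ≤ (bdryCard G W : ℝ) + ∑ x ∈ W, q x)
    (f : V → ℂ) (hf : (Function.support f).Finite) (hfU : ∀ x, f x ≠ 0 → x ∈ U) :
    (1 - Real.sqrt (1 - c^2)) * (qDeg G f + qPot q f) ≤ qLap G f + qPot q f ∧
    qLap G f + qPot q f ≤ (1 + Real.sqrt (1 - c^2)) * (qDeg G f + qPot q f) := by
  classical
  set S := hf.toFinset with hS
  set T := S ∪ S.biUnion (fun x => G.neighborFinset x) with hT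
  have hmemS : ∀ x, f x ≠ 0 → x ∈ S := by
    intro x hx; rw [hS, Set.Finite.mem_toFinset]; exact hx
  have h1 : ∀ x, f x ≠ 0 → x ∈ T := fun x hx => Finset.mem_union_left _ (hmemS x hx)
  have h2 : ∀ x y, G.Adj x y → f y ≠ 0 → x ∈ T := by
    intro x y hadj hy
    refine Finset.mem_union_right _ (Finset.mem_biUnion.mpr ⟨y, hmemS y hy, ?_⟩)
    exact (SimpleGraph.mem_neighborFinset _ _ _).mpr hadj.symm
  set g : V → ℝ := fun x => ‖f x‖ with hg
  have hgx : ∀ x, ‖f x‖ = g x := fun x => rfl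
  have hg0 : ∀ x, 0 ≤ g x := fun x => norm_nonneg _
  have hgsupp : ∀ x, g x ≠ 0 → f x ≠ 0 := by
    intro x h
    simpa [hg, norm_eq_zero] using h
  set L := ∑ x ∈ T, ∑ y ∈ G.neighborFinset x, (g x - g y)^2 with hL
  set P := ∑ x ∈ T, ∑ y ∈ G.neighborFinset x, (g x + g y)^2 with hP
  set Lc := ∑ x ∈ T, ∑ y ∈ G.neighborFinset x, ‖f x - f y‖^2 with hLc
  set D2 := ∑ x ∈ T, (G.degree x : ℝ) * g x ^ 2 with hD2
  set Qq := ∑ x ∈ T, q x * g x ^ 2 with hQq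
  have hqLap : qLap G f = (1/2) * Lc := my_qLap_eq G f T h1 h2
  have hqPot : qPot q f = Qq := by
    rw [my_qPot_eq q f T h1, hQq]
  have hqDeg : qDeg G f = D2 := by
    rw [my_qDeg_eq G f T h1, hD2]
  -- L + P = 4 * D2
  have hswap : ∑ x ∈ T, ∑ y ∈ G.neighborFinset x, g y ^ 2
      = ∑ x ∈ T, ∑ y ∈ G.neighborFinset x, g x ^ 2 := by
    have := my_swap_sum G T (fun x y => g y ^ 2) ?_
    · exact this
    · intro x y hadj hne
      have hy : g y ≠ 0 := fun h => hne (by simp [h])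
      exact ⟨h2 x y hadj (hgsupp y hy), h1 y (hgsupp y hy)⟩
  have hinner : ∀ x : V, ∑ y ∈ G.neighborFinset x, g x ^ 2 = (G.degree x : ℝ) * g x ^ 2 := by
    intro x
    rw [Finset.sum_const, nsmul_eq_mul, SimpleGraph.card_neighborFinset_eq_degree]
  have LPD : L + P = 4 * D2 := by
    have e : ∀ x ∈ T, ∀ y ∈ G.neighborFinset x,
        (g x - g y)^2 + (g x + g y)^2 = 2 * g x ^ 2 + 2 * g y ^ 2 := by
      intro x _ y _; ring
    have : L + P = ∑ x ∈ T, ∑ y ∈ G.neighborFinset x, (2 * g x ^ 2 + 2 * g y ^ 2) := by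
      rw [hL, hP, ← Finset.sum_add_distrib]
      refine Finset.sum_congr rfl fun x hx => ?_
      rw [← Finset.sum_add_distrib]
      exact Finset.sum_congr rfl fun y hy => e x hx y hy
    rw [this]
    have split : ∑ x ∈ T, ∑ y ∈ G.neighborFinset x, (2 * g x ^ 2 + 2 * g y ^ 2)
        = 2 * (∑ x ∈ T, ∑ y ∈ G.neighborFinset x, g x ^ 2)
          + 2 * (∑ x ∈ T, ∑ y ∈ G.neighborFinset x, g y ^ 2) := by
      rw [Finset.mul_sum, Finset.mul_sum, ← Finset.sum_add_distrib]
      refine Finset.sum_congr rfl fun x hx => ?_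
      rw [Finset.mul_sum, Finset.mul_sum, ← Finset.sum_add_distrib]
    rw [split, hswap, Finset.sum_congr rfl fun x _ => hinner x, hD2]
    ring
  -- co-area for g^2
  have hco := my_coarea G q U c hc0 hC T ((T.filter fun x => (fun z => g z ^ 2) x ≠ 0).card)
    (fun x => g x ^ 2) (fun x => sq_nonneg _)
    (fun x hx => h1 x (hgsupp x (by simpa [pow_eq_zero_iff] using hx)))
    (fun x y hadj hy => h2 x y hadj (hgsupp y (by simpa [pow_eq_zero_iff] using hy)))
    (fun x hx => hfU x (hgsupp x (by simpa [pow_eq_zero_iff] using hx)))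
    le_rfl
  have hd : ∑ x ∈ T, ((G.degree x : ℝ) + q x) * g x ^ 2 = D2 + Qq := by
    rw [hD2, hQq, ← Finset.sum_add_distrib]
    exact Finset.sum_congr rfl fun x _ => by ring
  set A := (1/2) * (∑ x ∈ T, ∑ y ∈ G.neighborFinset x, |g x ^ 2 - g y ^ 2|) + Qq with hA
  have hcoA : c * (D2 + Qq) ≤ A := by
    rw [← hd]
    exact hco
  have hCS := my_cs G q hq T g hg0
  set d := D2 + Qq with hdd
  set hr := (1/2) * L + Qq with hhr
  have hd0 : 0 ≤ d := by
    rw [hdd, hD2, hQq]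
    apply add_nonneg
    · exact Finset.sum_nonneg fun x _ => mul_nonneg (Nat.cast_nonneg _) (sq_nonneg _)
    · exact Finset.sum_nonneg fun x _ => mul_nonneg (hq x) (sq_nonneg _)
  have hr0 : 0 ≤ hr := by
    rw [hhr, hL, hQq]
    apply add_nonneg
    · apply mul_nonneg (by norm_num)
      exact Finset.sum_nonneg fun x _ => Finset.sum_nonneg fun y _ => sq_nonneg _
    · exact Finset.sum_nonneg fun x _ => mul_nonneg (hq x) (sq_nonneg _)
  have hPQ : (1/2) * P + Qq = 2 * d - hr := by
    rw [hdd, hhr]; linarith [LPD]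
  have hA2 : (c * d) ^ 2 ≤ hr * (2 * d - hr) := by
    calc (c * d) ^ 2 ≤ A ^ 2 :=
          pow_le_pow_left₀ (mul_nonneg hc0 hd0) hcoA 2
      _ ≤ hr * (2 * d - hr) := by rw [← hPQ]; exact hCS
  have key : (hr - d)^2 ≤ (1 - c^2) * d^2 := by nlinarith [hA2]
  have h1c : (0:ℝ) ≤ 1 - c^2 := by nlinarith
  have habs : |hr - d| ≤ Real.sqrt (1 - c^2) * d := by
    calc |hr - d| = Real.sqrt ((hr - d)^2) := (Real.sqrt_sq_eq_abs _).symm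
      _ ≤ Real.sqrt ((1 - c^2) * d^2) := Real.sqrt_le_sqrt key
      _ = Real.sqrt (1 - c^2) * Real.sqrt (d^2) := Real.sqrt_mul h1c _
      _ = Real.sqrt (1 - c^2) * d := by rw [Real.sqrt_sq hd0]
  obtain ⟨habs1, habs2⟩ := abs_le.mp habs
  -- comparison between complex and absolute-value forms
  have hlow : (1/2) * L ≤ (1/2) * Lc := by
    apply mul_le_mul_of_nonneg_left _ (by norm_num : (0:ℝ) ≤ 1/2)
    refine Finset.sum_le_sum fun x _ => Finset.sum_le_sum fun y _ => ?_
    rw [← sq_abs (g x - g y)]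
    exact pow_le_pow_left₀ (abs_nonneg _) (abs_norm_sub_norm_le (f x) (f y)) 2
  have hup : (1/2) * Lc ≤ (1/2) * P := by
    apply mul_le_mul_of_nonneg_left _ (by norm_num : (0:ℝ) ≤ 1/2)
    refine Finset.sum_le_sum fun x _ => Finset.sum_le_sum fun y _ => ?_
    exact pow_le_pow_left₀ (norm_nonneg _) (norm_sub_le (f x) (f y)) 2
  rw [hqLap, hqPot, hqDeg]
  constructor
  · have expand : (1 - Real.sqrt (1 - c^2)) * (D2 + Qq)
        = d - Real.sqrt (1 - c^2) * d := by rw [hdd]; ring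
    rw [expand]
    have : d - Real.sqrt (1 - c^2) * d ≤ hr := by linarith
    rw [hhr] at this
    linarith
  · have expand : (1 + Real.sqrt (1 - c^2)) * (D2 + Qq)
        = 2 * d - (d - Real.sqrt (1 - c^2) * d) := by rw [hdd]; ring
    rw [expand]
    have h3 : (1/2) * Lc + Qq ≤ 2 * d - hr := by
      rw [← hPQ]; linarith
    have h4 : d - Real.sqrt (1 - c^2) * d ≤ hr := by linarith
    rw [hhr] at h3 h4
    linarith


lemma my_bddBelow (q : V → ℝ) (hq : ∀ x, 0 ≤ q x) (U : Set V) :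
    BddBelow (Set.range fun (W : {W : Finset V // ↑W ⊆ U ∧ W.Nonempty}) =>
      if (∑ x ∈ W.1, ((G.degree x : ℝ) + q x)) = 0 then 0
      else ((bdryCard G W.1 : ℝ) + ∑ x ∈ W.1, q x) / ∑ x ∈ W.1, ((G.degree x : ℝ) + q x)) := by
  refine ⟨0, ?_⟩
  rintro r ⟨W, rfl⟩
  dsimp only
  split
  · exact le_rfl
  · refine div_nonneg (add_nonneg (Nat.cast_nonneg _) ?_) ?_
    · exact Finset.sum_nonneg fun x _ => hq x
    · exact Finset.sum_nonneg fun x _ => add_nonneg (Nat.cast_nonneg _) (hq x)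

lemma my_cheeger_bound (q : V → ℝ) (hq : ∀ x, 0 ≤ q x) (U : Set V) (c : ℝ) (hc0 : 0 ≤ c)
    (hcs : c ≤ cheeger G q U) :
    ∀ W : Finset V, ↑W ⊆ U → W.Nonempty →
      c * ∑ x ∈ W, ((G.degree x : ℝ) + q x) ≤ (bdryCard G W : ℝ) + ∑ x ∈ W, q x := by
  intro W hWU hWne
  have hterm := ciInf_le (my_bddBelow G q hq U) (⟨W, hWU, hWne⟩ :
    {W : Finset V // ↑W ⊆ U ∧ W.Nonempty})
  rw [cheeger] at hcs
  have hc' := le_trans hcs hterm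
  dsimp only at hc'
  have hnum : (0:ℝ) ≤ (bdryCard G W : ℝ) + ∑ x ∈ W, q x :=
    add_nonneg (Nat.cast_nonneg _) (Finset.sum_nonneg fun x _ => hq x)
  by_cases hden : (∑ x ∈ W, ((G.degree x : ℝ) + q x)) = 0
  · rw [hden, mul_zero]; exact hnum
  · rw [if_neg hden] at hc'
    have hden0 : 0 < ∑ x ∈ W, ((G.degree x : ℝ) + q x) :=
      lt_of_le_of_ne (Finset.sum_nonneg fun x _ => add_nonneg (Nat.cast_nonneg _) (hq x))
        (Ne.symm hden)
    calc c * ∑ x ∈ W, ((G.degree x : ℝ) + q x)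
        ≤ (((bdryCard G W : ℝ) + ∑ x ∈ W, q x) / ∑ x ∈ W, ((G.degree x : ℝ) + q x))
          * ∑ x ∈ W, ((G.degree x : ℝ) + q x) :=
          mul_le_mul_of_nonneg_right hc' hden0.le
      _ = (bdryCard G W : ℝ) + ∑ x ∈ W, q x := div_mul_cancel₀ _ hden

lemma my_bdry_le_deg (W : Finset V) : (bdryCard G W : ℝ) ≤ ∑ x ∈ W, (G.degree x : ℝ) := by
  rw [bdryCard, Nat.cast_sum]
  refine Finset.sum_le_sum fun x _ => ?_
  have := Finset.card_filter_le (G.neighborFinset x) (fun y => y ∉ W)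
  rw [SimpleGraph.card_neighborFinset_eq_degree] at this
  exact_mod_cast this

lemma my_cheeger_le_one (q : V → ℝ) (hq : ∀ x, 0 ≤ q x) (U : Set V) :
    cheeger G q U ≤ 1 := by
  rw [cheeger]
  by_cases hne : Nonempty {W : Finset V // ↑W ⊆ U ∧ W.Nonempty}
  · obtain ⟨W0⟩ := hne
    refine le_trans (ciInf_le (my_bddBelow G q hq U) W0) ?_
    split
    · exact zero_le_one
    · refine div_le_one_of_le₀ ?_
        (Finset.sum_nonneg fun x _ => add_nonneg (Nat.cast_nonneg _) (hq x))
      have h1 := my_bdry_le_deg G W0.1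
      have h2 : ∑ x ∈ W0.1, ((G.degree x : ℝ) + q x)
          = (∑ x ∈ W0.1, (G.degree x : ℝ)) + ∑ x ∈ W0.1, q x := Finset.sum_add_distrib
      linarith
  · haveI := not_nonempty_iff.mp hne
    rw [Real.iInf_of_isEmpty]
    exact zero_le_one

lemma my_cheegerInfty_le_one (q : V → ℝ) (hq : ∀ x, 0 ≤ q x) :
    cheegerInfty G q ≤ 1 := by
  rw [cheegerInfty]
  exact Real.iSup_le (fun K => my_cheeger_le_one G q hq _) zero_le_one


lemma my_norm_add_sq_le (δ : ℝ) (hδ : 0 < δ) (a b : ℂ) :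
    ‖a + b‖^2 ≤ (1+δ)*‖a‖^2 + (1+1/δ)*‖b‖^2 := by
  have h := norm_add_le a b
  have h2 : ‖a+b‖^2 ≤ (‖a‖+‖b‖)^2 := by
    apply pow_le_pow_left₀ (norm_nonneg _) h
  have h1 : δ * (1/δ) = 1 := by field_simp
  have hu : 0 < 1/δ := by positivity
  nlinarith [sq_nonneg (δ*‖a‖ - ‖b‖), norm_nonneg a, norm_nonneg b, hδ, hu,
    mul_nonneg (mul_nonneg hu.le (sq_nonneg (δ*‖a‖ - ‖b‖))) hu.le,
    mul_nonneg hu.le (sq_nonneg (δ*‖a‖ - ‖b‖))]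


/-- if `α_∞ > 0` then for every `ε > 0` there is `k_ε ≥ 0` with
`(1-ε)(1-√(1-α_∞²))(Q_deg(f)+Q_q(f)) - k_ε‖f‖² ≤ Q_Δ(f)+Q_q(f)
  ≤ (1+ε)(1+√(1-α_∞²))(Q_deg(f)+Q_q(f)) + k_ε‖f‖²` for all finitely supported `f`. -/
theorem stmt15 [Countable V] (q : V → ℝ) (hq : ∀ x, 0 ≤ q x)
    (hα : 0 < cheegerInfty G q) :
    ∀ ε : ℝ, 0 < ε → ∃ kε : ℝ, 0 ≤ kε ∧
      ∀ f : V → ℂ, (Function.support f).Finite →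
        (1 - ε) * (1 - Real.sqrt (1 - (cheegerInfty G q) ^ 2)) * (qDeg G f + qPot q f)
            - kε * qNormSq f ≤ qLap G f + qPot q f ∧
        qLap G f + qPot q f ≤
          (1 + ε) * (1 + Real.sqrt (1 - (cheegerInfty G q) ^ 2)) * (qDeg G f + qPot q f)
            + kε * qNormSq f := by
  intro ε hε
  have hα1 : cheegerInfty G q ≤ 1 := my_cheegerInfty_le_one G q hq
  set α := cheegerInfty G q with hαdef
  set sI := Real.sqrt (1 - α^2) with hsinf
  have hs0 : 0 ≤ sI := Real.sqrt_nonneg _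
  have h1a : (0:ℝ) ≤ 1 - α^2 := by nlinarith
  have hssq : sI^2 = 1 - α^2 := Real.sq_sqrt h1a
  have hs1' : sI ≤ 1 := by
    rw [hsinf]
    calc Real.sqrt (1 - α^2) ≤ Real.sqrt 1 := Real.sqrt_le_sqrt (by nlinarith)
      _ = 1 := Real.sqrt_one
  have hs1 : sI < 1 := by
    rcases eq_or_lt_of_le hs1' with h | h
    · exfalso
      have : sI^2 = 1 := by rw [h]; norm_num
      nlinarith
    · exact h
  set δ := min (ε/4) 1 with hδdef
  have hδ0 : 0 < δ := lt_min (by linarith) one_pos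
  have hδε : δ ≤ ε/4 := min_le_left _ _
  have hδ1 : δ ≤ 1 := min_le_right _ _
  set η := min (min (ε/4) (α/2)) ((3/4) * min ε 1 * (1 - sI)) with hηdef
  have hη0 : 0 < η := by
    refine lt_min (lt_min (by linarith) (by linarith)) ?_
    have h1 : 0 < min ε 1 := lt_min hε one_pos
    nlinarith
  have hηε : η ≤ ε/4 := le_trans (min_le_left _ _) (min_le_left _ _)
  have hηα : η ≤ α/2 := le_trans (min_le_left _ _) (min_le_right _ _)
  have hηs : η ≤ (3/4) * min ε 1 * (1 - sI) := min_le_right _ _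
  set c := Real.sqrt (α^2 - η^2) with hcdef
  have hαη : (0:ℝ) ≤ α^2 - η^2 := by nlinarith
  have hc0 : 0 ≤ c := Real.sqrt_nonneg _
  have hcsq : c^2 = α^2 - η^2 := Real.sq_sqrt hαη
  have hc1 : c ≤ 1 := by
    rw [hcdef]
    calc Real.sqrt (α^2 - η^2) ≤ Real.sqrt 1 := Real.sqrt_le_sqrt (by nlinarith)
      _ = 1 := Real.sqrt_one
  have hcα : c < α := by
    rw [hcdef]
    calc Real.sqrt (α^2 - η^2) < Real.sqrt (α^2) := Real.sqrt_lt_sqrt hαη (by nlinarith)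
      _ = α := Real.sqrt_sq hα.le
  set s := Real.sqrt (1 - c^2) with hsdef
  have hsn0 : 0 ≤ s := Real.sqrt_nonneg _
  have hsle : s ≤ sI + η := by
    have h1 : 1 - c^2 = (1 - α^2) + η^2 := by rw [hcsq]; ring
    have h2 : (1 - α^2) + η^2 ≤ (sI + η)^2 := by nlinarith
    rw [hsdef, h1]
    calc Real.sqrt ((1 - α^2) + η^2) ≤ Real.sqrt ((sI + η)^2) := Real.sqrt_le_sqrt h2
      _ = sI + η := Real.sqrt_sq (by linarith)
  have hsle1 : s ≤ 1 := by
    rw [hsdef]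
    calc Real.sqrt (1 - c^2) ≤ Real.sqrt 1 := Real.sqrt_le_sqrt (by nlinarith)
      _ = 1 := Real.sqrt_one
  have hA : (1+δ)*(1+s) ≤ (1+ε)*(1+sI) := by
    have h1 : δ * s ≤ δ * (sI + η) := mul_le_mul_of_nonneg_left hsle hδ0.le
    have h2 : δ * sI ≤ (ε/4) * 1 := mul_le_mul hδε hs1' hs0 (by linarith)
    have h3 : δ * η ≤ 1 * (ε/4) := mul_le_mul hδ1 hηε hη0.le zero_le_one
    have h4 : 0 ≤ ε * sI := mul_nonneg hε.le hs0
    nlinarith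
  have hB : (1+δ)*(1-ε)*(1-sI) ≤ 1 - s := by
    rcases le_or_gt 1 ε with h | h
    · have h5 : (1+δ)*(1-ε) ≤ 0 := mul_nonpos_of_nonneg_of_nonpos (by linarith) (by linarith)
      nlinarith
    · have hmin : min ε 1 = ε := min_eq_left h.le
      rw [hmin] at hηs
      have h1 : (1+δ)*(1-ε) ≤ 1 - (3/4)*ε := by nlinarith
      have h2 : (1+δ)*(1-ε)*(1-sI) ≤ (1 - (3/4)*ε)*(1-sI) :=
        mul_le_mul_of_nonneg_right h1 (by linarith)
      nlinarith
  have hlt : c < ⨆ K : Finset V, cheeger G q ((↑K : Set V)ᶜ) := by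
    rw [← cheegerInfty]
    exact hcα
  obtain ⟨K, hK⟩ := exists_lt_of_lt_ciSup hlt
  have hC := my_cheeger_bound G q hq ((↑K : Set V)ᶜ) c hc0 hK.le
  set CK := ∑ z ∈ K, (2*(G.degree z : ℝ) + q z) with hCK
  have hCK0 : 0 ≤ CK :=
    Finset.sum_nonneg fun z _ => add_nonneg (by positivity) (hq z)
  refine ⟨(2 + 1/δ) * CK, mul_nonneg (by positivity) hCK0, ?_⟩
  intro f hf
  classical
  set f1 : V → ℂ := fun x => if x ∈ K then f x else 0 with hf1d
  set f2 : V → ℂ := fun x => if x ∈ K then 0 else f x with hf2d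
  have hf1supp : ∀ x, f1 x ≠ 0 → f x ≠ 0 ∧ x ∈ K := by
    intro x hx
    by_cases h : x ∈ K
    · refine ⟨?_, h⟩; simpa [hf1d, h] using hx
    · exact absurd (by simp [hf1d, h]) hx
  have hf2supp : ∀ x, f2 x ≠ 0 → f x ≠ 0 ∧ x ∉ K := by
    intro x hx
    by_cases h : x ∈ K
    · exact absurd (by simp [hf2d, h]) hx
    · refine ⟨?_, h⟩; simpa [hf2d, h] using hx
  have hfin2 : (Function.support f2).Finite :=
    hf.subset fun x hx => (hf2supp x hx).1
  set S : Finset V := hf.toFinset ∪ K with hSd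
  set T : Finset V := S ∪ S.biUnion (fun x => G.neighborFinset x) with hTd
  have hfS : ∀ x, f x ≠ 0 → x ∈ S := fun x hx =>
    Finset.mem_union_left _ (hf.mem_toFinset.mpr hx)
  have hKS : ∀ x, x ∈ K → x ∈ S := fun x hx => Finset.mem_union_right _ hx
  have hgood : ∀ F : V → ℂ, (∀ x, F x ≠ 0 → x ∈ S) →
      (∀ x, F x ≠ 0 → x ∈ T) ∧ (∀ x y, G.Adj x y → F y ≠ 0 → x ∈ T) := by
    intro F hFS
    constructor
    · exact fun x hx => Finset.mem_union_left _ (hFS x hx)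
    · intro x y hadj hy
      refine Finset.mem_union_right _ (Finset.mem_biUnion.mpr ⟨y, hFS y hy, ?_⟩)
      exact (SimpleGraph.mem_neighborFinset _ _ _).mpr hadj.symm
  obtain ⟨hgf1, hgf2⟩ := hgood f hfS
  obtain ⟨hg11, hg12⟩ := hgood f1 (fun x hx => hKS x (hf1supp x hx).2)
  obtain ⟨hg21, hg22⟩ := hgood f2 (fun x hx => hfS x (hf2supp x hx).1)
  have eLapf : qLap G f = (1/2) * ∑ x ∈ T, ∑ y ∈ G.neighborFinset x, ‖f x - f y‖^2 :=
    my_qLap_eq G f T hgf1 hgf2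
  have eLap1 : qLap G f1 = (1/2) * ∑ x ∈ T, ∑ y ∈ G.neighborFinset x, ‖f1 x - f1 y‖^2 :=
    my_qLap_eq G f1 T hg11 hg12
  have eLap2 : qLap G f2 = (1/2) * ∑ x ∈ T, ∑ y ∈ G.neighborFinset x, ‖f2 x - f2 y‖^2 :=
    my_qLap_eq G f2 T hg21 hg22
  have hnsplit : ∀ x, ‖f x‖^2 = ‖f1 x‖^2 + ‖f2 x‖^2 := by
    intro x; by_cases h : x ∈ K <;> simp [hf1d, hf2d, h]
  have ePotS : qPot q f = qPot q f1 + qPot q f2 := by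
    rw [my_qPot_eq q f T hgf1, my_qPot_eq q f1 T hg11, my_qPot_eq q f2 T hg21,
      ← Finset.sum_add_distrib]
    exact Finset.sum_congr rfl fun x _ => by rw [hnsplit x]; ring
  have eDegS : qDeg G f = qDeg G f1 + qDeg G f2 := by
    rw [my_qDeg_eq G f T hgf1, my_qDeg_eq G f1 T hg11, my_qDeg_eq G f2 T hg21,
      ← Finset.sum_add_distrib]
    exact Finset.sum_congr rfl fun x _ => by rw [hnsplit x]; ring
  have hPot1 : 0 ≤ qPot q f1 := by
    rw [my_qPot_eq q f1 T hg11]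
    exact Finset.sum_nonneg fun x _ => mul_nonneg (hq x) (sq_nonneg _)
  have hPot2 : 0 ≤ qPot q f2 := by
    rw [my_qPot_eq q f2 T hg21]
    exact Finset.sum_nonneg fun x _ => mul_nonneg (hq x) (sq_nonneg _)
  have hPotf : 0 ≤ qPot q f := by
    rw [my_qPot_eq q f T hgf1]
    exact Finset.sum_nonneg fun x _ => mul_nonneg (hq x) (sq_nonneg _)
  have hDeg1 : 0 ≤ qDeg G f1 := by
    rw [my_qDeg_eq G f1 T hg11]
    exact Finset.sum_nonneg fun x _ => mul_nonneg (Nat.cast_nonneg _) (sq_nonneg _)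
  have hDegf : 0 ≤ qDeg G f := by
    rw [my_qDeg_eq G f T hgf1]
    exact Finset.sum_nonneg fun x _ => mul_nonneg (Nat.cast_nonneg _) (sq_nonneg _)
  have hNf : 0 ≤ qNormSq f := by
    rw [my_qNormSq_eq f T hgf1]
    exact Finset.sum_nonneg fun x _ => sq_nonneg _
  have hLap1nn : 0 ≤ qLap G f1 := by
    rw [eLap1]
    exact mul_nonneg (by norm_num)
      (Finset.sum_nonneg fun x _ => Finset.sum_nonneg fun y _ => sq_nonneg _)
  have hDf0 : 0 ≤ qDeg G f + qPot q f := add_nonneg hDegf hPotf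
  -- CK bounds
  have hcoefK : ∀ x ∈ K, 2*(G.degree x : ℝ) + q x ≤ CK := by
    intro x hx
    rw [hCK]
    exact Finset.single_le_sum (f := fun z => 2*(G.degree z : ℝ) + q z)
      (fun z _ => add_nonneg (by positivity) (hq z)) hx
  have htermK : ∀ cf : V → ℝ, (∀ x ∈ K, cf x ≤ CK) →
      ∑ x ∈ T, cf x * ‖f1 x‖^2 ≤ CK * qNormSq f := by
    intro cf hcfK
    rw [my_qNormSq_eq f T hgf1, Finset.mul_sum]
    refine Finset.sum_le_sum fun x _ => ?_
    by_cases h : x ∈ K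
    · have h1 : ‖f1 x‖ = ‖f x‖ := by rw [hf1d]; simp [h]
      rw [h1]
      exact mul_le_mul_of_nonneg_right (hcfK x h) (sq_nonneg _)
    · have h1 : f1 x = 0 := by rw [hf1d]; simp [h]
      rw [h1]
      simpa using mul_nonneg hCK0 (sq_nonneg ‖f x‖)
  have hswap1 : ∑ x ∈ T, ∑ y ∈ G.neighborFinset x, ‖f1 y‖^2
      = ∑ x ∈ T, ∑ y ∈ G.neighborFinset x, ‖f1 x‖^2 :=
    my_swap_sum G T (fun x y => ‖f1 y‖^2) (by
      intro x y hadj hne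
      have hy : f1 y ≠ 0 := by intro h; exact hne (by simp [h])
      exact ⟨hg12 x y hadj hy, hg11 y hy⟩)
  have hinner1 : ∀ x : V, ∑ y ∈ G.neighborFinset x, ‖f1 x‖^2
      = (G.degree x : ℝ) * ‖f1 x‖^2 := by
    intro x
    rw [Finset.sum_const, nsmul_eq_mul, SimpleGraph.card_neighborFinset_eq_degree]
  have hLap1 : qLap G f1 ≤ 2 * qDeg G f1 := by
    rw [eLap1, my_qDeg_eq G f1 T hg11]
    have hpt : ∑ x ∈ T, ∑ y ∈ G.neighborFinset x, ‖f1 x - f1 y‖^2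
        ≤ ∑ x ∈ T, ∑ y ∈ G.neighborFinset x, (2*‖f1 x‖^2 + 2*‖f1 y‖^2) := by
      refine Finset.sum_le_sum fun x _ => Finset.sum_le_sum fun y _ => ?_
      have h := norm_sub_le (f1 x) (f1 y)
      nlinarith only [h, sq_nonneg (‖f1 x‖ - ‖f1 y‖), norm_nonneg (f1 x),
        norm_nonneg (f1 y), norm_nonneg (f1 x - f1 y)]
    have hsplit : ∑ x ∈ T, ∑ y ∈ G.neighborFinset x, (2*‖f1 x‖^2 + 2*‖f1 y‖^2)
        = 2 * (∑ x ∈ T, ∑ y ∈ G.neighborFinset x, ‖f1 x‖^2)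
          + 2 * (∑ x ∈ T, ∑ y ∈ G.neighborFinset x, ‖f1 y‖^2) := by
      rw [Finset.mul_sum, Finset.mul_sum, ← Finset.sum_add_distrib]
      refine Finset.sum_congr rfl fun x _ => ?_
      rw [Finset.mul_sum, Finset.mul_sum, ← Finset.sum_add_distrib]
    calc (1/2) * ∑ x ∈ T, ∑ y ∈ G.neighborFinset x, ‖f1 x - f1 y‖^2
        ≤ (1/2) * ∑ x ∈ T, ∑ y ∈ G.neighborFinset x, (2*‖f1 x‖^2 + 2*‖f1 y‖^2) :=
          mul_le_mul_of_nonneg_left hpt (by norm_num)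
      _ = 2 * ∑ x ∈ T, ∑ y ∈ G.neighborFinset x, ‖f1 x‖^2 := by
          rw [hsplit, hswap1]; ring
      _ = 2 * ∑ x ∈ T, (G.degree x : ℝ) * ‖f1 x‖^2 := by
          rw [Finset.sum_congr rfl fun x _ => hinner1 x]
  have hH1 : qLap G f1 + qPot q f1 ≤ CK * qNormSq f := by
    have h1 : 2 * qDeg G f1 + qPot q f1
        = ∑ x ∈ T, (2*(G.degree x : ℝ) + q x) * ‖f1 x‖^2 := by
      rw [my_qDeg_eq G f1 T hg11, my_qPot_eq q f1 T hg11, Finset.mul_sum,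
        ← Finset.sum_add_distrib]
      exact Finset.sum_congr rfl fun x _ => by ring
    have h2 := htermK (fun x => 2*(G.degree x : ℝ) + q x) hcoefK
    linarith only [hLap1, h1, h2]
  have hD1 : qDeg G f1 + qPot q f1 ≤ CK * qNormSq f := by
    have h1 : qDeg G f1 + qPot q f1
        = ∑ x ∈ T, ((G.degree x : ℝ) + q x) * ‖f1 x‖^2 := by
      rw [my_qDeg_eq G f1 T hg11, my_qPot_eq q f1 T hg11, ← Finset.sum_add_distrib]
      exact Finset.sum_congr rfl fun x _ => by ring
    have h2 := htermK (fun x => (G.degree x : ℝ) + q x) (fun x hx => by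
      have h3 : (0:ℝ) ≤ (G.degree x : ℝ) := Nat.cast_nonneg _
      show (G.degree x : ℝ) + q x ≤ CK
      linarith only [hcoefK x hx, h3])
    linarith only [h1, h2]
  -- crossing inequalities
  have hsum12 : ∀ x, f x = f2 x + f1 x := by
    intro x; by_cases h : x ∈ K <;> simp [hf1d, hf2d, h]
  have hX1 : qLap G f ≤ (1+δ) * qLap G f2 + (1+1/δ) * qLap G f1 := by
    rw [eLapf, eLap1, eLap2]
    have hpt : ∑ x ∈ T, ∑ y ∈ G.neighborFinset x, ‖f x - f y‖^2
        ≤ ∑ x ∈ T, ∑ y ∈ G.neighborFinset x,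
          ((1+δ)*‖f2 x - f2 y‖^2 + (1+1/δ)*‖f1 x - f1 y‖^2) := by
      refine Finset.sum_le_sum fun x _ => Finset.sum_le_sum fun y _ => ?_
      have h1 : f x - f y = (f2 x - f2 y) + (f1 x - f1 y) := by
        rw [hsum12 x, hsum12 y]; ring
      rw [h1]
      exact my_norm_add_sq_le δ hδ0 _ _
    have hsplit : ∑ x ∈ T, ∑ y ∈ G.neighborFinset x,
          ((1+δ)*‖f2 x - f2 y‖^2 + (1+1/δ)*‖f1 x - f1 y‖^2)
        = (1+δ) * (∑ x ∈ T, ∑ y ∈ G.neighborFinset x, ‖f2 x - f2 y‖^2)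
          + (1+1/δ) * (∑ x ∈ T, ∑ y ∈ G.neighborFinset x, ‖f1 x - f1 y‖^2) := by
      rw [Finset.mul_sum, Finset.mul_sum, ← Finset.sum_add_distrib]
      refine Finset.sum_congr rfl fun x _ => ?_
      rw [Finset.mul_sum, Finset.mul_sum, ← Finset.sum_add_distrib]
    calc (1/2) * ∑ x ∈ T, ∑ y ∈ G.neighborFinset x, ‖f x - f y‖^2
        ≤ (1/2) * ∑ x ∈ T, ∑ y ∈ G.neighborFinset x,
            ((1+δ)*‖f2 x - f2 y‖^2 + (1+1/δ)*‖f1 x - f1 y‖^2) :=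
          mul_le_mul_of_nonneg_left hpt (by norm_num)
      _ = (1+δ) * ((1/2) * ∑ x ∈ T, ∑ y ∈ G.neighborFinset x, ‖f2 x - f2 y‖^2)
          + (1+1/δ) * ((1/2) * ∑ x ∈ T, ∑ y ∈ G.neighborFinset x, ‖f1 x - f1 y‖^2) := by
          rw [hsplit]; ring
  have hX2 : qLap G f2 ≤ (1+δ) * qLap G f + (1+1/δ) * qLap G f1 := by
    rw [eLapf, eLap1, eLap2]
    have hpt : ∑ x ∈ T, ∑ y ∈ G.neighborFinset x, ‖f2 x - f2 y‖^2
        ≤ ∑ x ∈ T, ∑ y ∈ G.neighborFinset x,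
          ((1+δ)*‖f x - f y‖^2 + (1+1/δ)*‖f1 x - f1 y‖^2) := by
      refine Finset.sum_le_sum fun x _ => Finset.sum_le_sum fun y _ => ?_
      have h1 : f2 x - f2 y = (f x - f y) + (-(f1 x - f1 y)) := by
        rw [hsum12 x, hsum12 y]; ring
      calc ‖f2 x - f2 y‖^2 = ‖(f x - f y) + (-(f1 x - f1 y))‖^2 := by rw [← h1]
        _ ≤ (1+δ)*‖f x - f y‖^2 + (1+1/δ)*‖-(f1 x - f1 y)‖^2 :=
          my_norm_add_sq_le δ hδ0 _ _
        _ = (1+δ)*‖f x - f y‖^2 + (1+1/δ)*‖f1 x - f1 y‖^2 := by rw [norm_neg]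
    have hsplit : ∑ x ∈ T, ∑ y ∈ G.neighborFinset x,
          ((1+δ)*‖f x - f y‖^2 + (1+1/δ)*‖f1 x - f1 y‖^2)
        = (1+δ) * (∑ x ∈ T, ∑ y ∈ G.neighborFinset x, ‖f x - f y‖^2)
          + (1+1/δ) * (∑ x ∈ T, ∑ y ∈ G.neighborFinset x, ‖f1 x - f1 y‖^2) := by
      rw [Finset.mul_sum, Finset.mul_sum, ← Finset.sum_add_distrib]
      refine Finset.sum_congr rfl fun x _ => ?_
      rw [Finset.mul_sum, Finset.mul_sum, ← Finset.sum_add_distrib]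
    calc (1/2) * ∑ x ∈ T, ∑ y ∈ G.neighborFinset x, ‖f2 x - f2 y‖^2
        ≤ (1/2) * ∑ x ∈ T, ∑ y ∈ G.neighborFinset x,
            ((1+δ)*‖f x - f y‖^2 + (1+1/δ)*‖f1 x - f1 y‖^2) :=
          mul_le_mul_of_nonneg_left hpt (by norm_num)
      _ = (1+δ) * ((1/2) * ∑ x ∈ T, ∑ y ∈ G.neighborFinset x, ‖f x - f y‖^2)
          + (1+1/δ) * ((1/2) * ∑ x ∈ T, ∑ y ∈ G.neighborFinset x, ‖f1 x - f1 y‖^2) := by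
          rw [hsplit]; ring
  -- regional estimate for f2
  have hreg := my_regional G q hq ((↑K : Set V)ᶜ) c hc0 hc1 hC f2 hfin2
    (fun x hx => by simpa using (hf2supp x hx).2)
  rw [← hsdef] at hreg
  obtain ⟨hregL, hregU⟩ := hreg
  have hδinv : (0:ℝ) < 1/δ := by positivity
  have hCKNf : 0 ≤ CK * qNormSq f := mul_nonneg hCK0 hNf
  -- upper bound
  have h1u : qLap G f + qPot q f
      ≤ (1+δ)*(qLap G f2 + qPot q f2) + (1+1/δ)*(qLap G f1 + qPot q f1) := by
    have e1 : 0 ≤ δ * qPot q f2 := mul_nonneg hδ0.le hPot2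
    have e2 : 0 ≤ (1/δ) * qPot q f1 := mul_nonneg hδinv.le hPot1
    nlinarith only [hX1, ePotS, e1, e2]
  have h2u : (1+δ)*(qLap G f2 + qPot q f2) ≤ (1+δ)*((1+s)*(qDeg G f2 + qPot q f2)) :=
    mul_le_mul_of_nonneg_left hregU (by linarith)
  have h3u : qDeg G f2 + qPot q f2 ≤ qDeg G f + qPot q f := by
    linarith only [eDegS, ePotS, hDeg1, hPot1]
  have h4u : (1+δ)*((1+s)*(qDeg G f2 + qPot q f2))
      ≤ (1+δ)*((1+s)*(qDeg G f + qPot q f)) := by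
    refine mul_le_mul_of_nonneg_left ?_ (by linarith)
    exact mul_le_mul_of_nonneg_left h3u (by linarith)
  have h5u : ((1+δ)*(1+s))*(qDeg G f + qPot q f)
      ≤ ((1+ε)*(1+sI))*(qDeg G f + qPot q f) :=
    mul_le_mul_of_nonneg_right hA hDf0
  have h6u : (1+1/δ)*(qLap G f1 + qPot q f1) ≤ (1+1/δ)*(CK*qNormSq f) :=
    mul_le_mul_of_nonneg_left hH1 (by linarith)
  -- lower bound
  have hr2 : qLap G f2 + qPot q f2
      ≤ (1+δ)*(qLap G f + qPot q f) + (1+1/δ)*(CK*qNormSq f) := by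
    have e1 : 0 ≤ δ * qPot q f := mul_nonneg hδ0.le hPotf
    have e2 : qPot q f2 ≤ qPot q f := by linarith only [ePotS, hPot1]
    nlinarith only [hX2, h6u, hPot1, mul_nonneg hδinv.le hPot1, e1, e2]
  have hDf2 : (qDeg G f + qPot q f) - CK*qNormSq f ≤ qDeg G f2 + qPot q f2 := by
    linarith only [hD1, eDegS, ePotS]
  have hr1 : (1-s)*((qDeg G f + qPot q f) - CK*qNormSq f)
      ≤ (1-s)*(qDeg G f2 + qPot q f2) :=
    mul_le_mul_of_nonneg_left hDf2 (by linarith)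
  have hKey : (1-s)*(qDeg G f + qPot q f) - (2+1/δ)*CK*qNormSq f
      ≤ (1+δ)*(qLap G f + qPot q f) := by
    nlinarith only [hr1, hregL, hr2, hCKNf, mul_nonneg (mul_nonneg hsn0 hCK0) hNf,
      mul_nonneg hδinv.le hCKNf]
  have hBD : ((1+δ)*(1-ε)*(1-sI))*(qDeg G f + qPot q f)
      ≤ (1-s)*(qDeg G f + qPot q f) := mul_le_mul_of_nonneg_right hB hDf0
  have hδk : 0 ≤ δ*((2+1/δ)*CK)*qNormSq f :=
    mul_nonneg (mul_nonneg hδ0.le (mul_nonneg (by linarith) hCK0)) hNf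
  have hKey2 : (1+δ)*((1-ε)*(1-sI)*(qDeg G f + qPot q f) - (2+1/δ)*CK*qNormSq f)
      ≤ (1+δ)*(qLap G f + qPot q f) := by
    nlinarith only [hBD, hKey, hδk]
  constructor
  · have := le_of_mul_le_mul_left hKey2 (by linarith only [hδ0] : (0:ℝ) < 1+δ)
    linarith only [this]
  · calc qLap G f + qPot q f
        ≤ (1+δ)*(qLap G f2 + qPot q f2) + (1+1/δ)*(qLap G f1 + qPot q f1) := h1u
      _ ≤ (1+δ)*((1+s)*(qDeg G f + qPot q f)) + (1+1/δ)*(CK*qNormSq f) := by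
          linarith only [h2u, h4u, h6u]
      _ ≤ ((1+ε)*(1+sI))*(qDeg G f + qPot q f) + (2+1/δ)*CK*qNormSq f := by
          nlinarith only [h5u, hCKNf]
      _ = (1+ε)*(1+sI)*(qDeg G f + qPot q f) + (2+1/δ)*CK*qNormSq f := by ring



end
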